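/- Let $F$ be an uncountable closed subset of a bounded closed interval $[a,b] \subset \mathbb{R}$. Then there exists a perfect (nonempty, compact, without isolated points) set $K \subseteq F$ such that for every $\alpha < 1$, the function $x \mapsto (\mathrm{dist}(x,K))^{-\alpha}$ is Lebesgue integrable on $[a,b]$. -/

import Mathlib

open MeasureTheory Set
open scoped ENNReal NNReal

noncomputable def rfun (n : ℕ) : ℝ := (2 : ℝ) ^ (-((n : ℝ)) ^ 2)

lemma rfun_pos (n : ℕ) : 0 < rfun n := Real.rpow_pos_of_pos two_pos _

lemma rfun_le_one (n : ℕ) : rfun n ≤ 1 := by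
  rw [rfun, show (1:ℝ) = (2:ℝ) ^ (0:ℝ) by simp]
  apply Real.rpow_le_rpow_of_exponent_le one_le_two
  nlinarith [sq_nonneg ((n:ℝ))]

lemma rfun_anti {m n : ℕ} (h : m ≤ n) : rfun n ≤ rfun m := by
  apply Real.rpow_le_rpow_of_exponent_le one_le_two
  have : (m:ℝ) ≤ (n:ℝ) := by exact_mod_cast h
  nlinarith [Nat.cast_nonneg (α := ℝ) m]

lemma rfun_tendsto : Filter.Tendsto rfun Filter.atTop (nhds 0) := by
  have h : ∀ n, rfun n ≤ (1/2 : ℝ) ^ n := by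
    intro n
    rw [rfun, show ((1:ℝ)/2) ^ n = (2:ℝ) ^ (-(n:ℝ)) by
      rw [Real.rpow_neg (by norm_num), Real.rpow_natCast, one_div, inv_pow]]
    apply Real.rpow_le_rpow_of_exponent_le one_le_two
    have hn : (n:ℝ) ≤ (n:ℝ)^2 := by exact_mod_cast Nat.le_self_pow two_ne_zero n
    linarith
  have h0 : ∀ n, 0 ≤ rfun n := fun n => (rfun_pos n).le
  have := tendsto_pow_atTop_nhds_zero_of_lt_one (by norm_num : (0:ℝ) ≤ 1/2) (by norm_num)
  exact squeeze_zero h0 h this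

def Sn : ℕ → Finset (List Bool)
  | 0 => {[]}
  | n+1 => (Sn n).image (List.cons false) ∪ (Sn n).image (List.cons true)

lemma mem_Sn {n : ℕ} {s : List Bool} : s ∈ Sn n ↔ s.length = n := by
  induction n generalizing s with
  | zero => simp [Sn, List.length_eq_zero_iff]
  | succ n ih =>
    simp only [Sn, Finset.mem_union, Finset.mem_image]
    constructor
    · rintro (⟨t, ht, rfl⟩ | ⟨t, ht, rfl⟩) <;> simp [ih.mp ht]
    · intro hs
      match s with
      | b :: t =>
        have : t.length = n := by simpa using hs
        cases b
        · exact Or.inl ⟨t, ih.mpr this, rfl⟩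
        · exact Or.inr ⟨t, ih.mpr this, rfl⟩

lemma card_Sn (n : ℕ) : (Sn n).card ≤ 2 ^ n := by
  induction n with
  | zero => simp [Sn]
  | succ n ih =>
    calc (Sn (n+1)).card ≤ ((Sn n).image (List.cons false)).card
        + ((Sn n).image (List.cons true)).card := Finset.card_union_le _ _
      _ ≤ (Sn n).card + (Sn n).card := by
          have h1 := Finset.card_image_le (s := Sn n) (f := List.cons false)
          have h2 := Finset.card_image_le (s := Sn n) (f := List.cons true)
          omega
      _ ≤ 2 ^ n + 2 ^ n := by omega
      _ = 2 ^ (n+1) := by ring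

lemma exists_pair (E : Set ℝ) (hE : Perfect E) (hne : E.Nonempty) (δ : ℝ) (hδ : 0 < δ) :
    ∃ p : Set ℝ × Set ℝ,
      (Perfect p.1 ∧ p.1.Nonempty ∧ p.1 ⊆ E ∧ ∃ z, p.1 ⊆ Metric.closedBall z δ) ∧
      (Perfect p.2 ∧ p.2.Nonempty ∧ p.2 ⊆ E ∧ ∃ z, p.2 ⊆ Metric.closedBall z δ) ∧
      Disjoint p.1 p.2 := by
  obtain ⟨C₀, C₁, ⟨h0p, h0ne, h0s⟩, ⟨h1p, h1ne, h1s⟩, hdisj⟩ := hE.splitting hne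
  obtain ⟨x₀, hx₀⟩ := h0ne
  obtain ⟨x₁, hx₁⟩ := h1ne
  have key : ∀ (C : Set ℝ) (x : ℝ), Perfect C → x ∈ C →
      Perfect (closure (Metric.ball x δ ∩ C)) ∧ (closure (Metric.ball x δ ∩ C)).Nonempty ∧
      closure (Metric.ball x δ ∩ C) ⊆ C ∧
      closure (Metric.ball x δ ∩ C) ⊆ Metric.closedBall x δ := by
    intro C x hC hx
    obtain ⟨hp, hn⟩ := hC.closure_nhds_inter x hx (Metric.mem_ball_self hδ) Metric.isOpen_ball
    refine ⟨hp, hn, ?_, ?_⟩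
    · rw [hC.closed.closure_subset_iff]; exact inter_subset_right
    · exact (closure_mono inter_subset_left).trans Metric.closure_ball_subset_closedBall
  obtain ⟨p0, n0, s0, b0⟩ := key C₀ x₀ h0p hx₀
  obtain ⟨p1, n1, s1, b1⟩ := key C₁ x₁ h1p hx₁
  exact ⟨(_, _), ⟨p0, n0, s0.trans h0s, x₀, b0⟩, ⟨p1, n1, s1.trans h1s, x₁, b1⟩,
    hdisj.mono s0 s1⟩
open Classical in
noncomputable def pairOf (E : Set ℝ) (δ : ℝ) : Set ℝ × Set ℝ :=
  if h : Perfect E ∧ E.Nonempty ∧ 0 < δ then (exists_pair E h.1 h.2.1 δ h.2.2).choose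
  else (E, E)

lemma pairOf_spec {E : Set ℝ} {δ : ℝ} (hE : Perfect E) (hne : E.Nonempty) (hδ : 0 < δ) :
    (Perfect (pairOf E δ).1 ∧ (pairOf E δ).1.Nonempty ∧ (pairOf E δ).1 ⊆ E ∧
      ∃ z, (pairOf E δ).1 ⊆ Metric.closedBall z δ) ∧
    (Perfect (pairOf E δ).2 ∧ (pairOf E δ).2.Nonempty ∧ (pairOf E δ).2 ⊆ E ∧
      ∃ z, (pairOf E δ).2 ⊆ Metric.closedBall z δ) ∧
    Disjoint (pairOf E δ).1 (pairOf E δ).2 := by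
  rw [pairOf, dif_pos (show Perfect E ∧ E.Nonempty ∧ 0 < δ from ⟨hE, hne, hδ⟩)]
  exact (exists_pair E hE hne δ hδ).choose_spec

noncomputable def TT (C : Set ℝ) : List Bool → Set ℝ
  | [] => C
  | (b :: s) =>
    if b then (pairOf (TT C s) (rfun (s.length + 1))).2
    else (pairOf (TT C s) (rfun (s.length + 1))).1

variable {C : Set ℝ}

lemma TT_perfect (hC : Perfect C) (hne : C.Nonempty) :
    ∀ s : List Bool, Perfect (TT C s) ∧ (TT C s).Nonempty := by
  intro s
  induction s with
  | nil => exact ⟨hC, hne⟩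
  | cons b s ih =>
    have hs := pairOf_spec ih.1 ih.2 (rfun_pos (s.length + 1))
    cases b
    · exact ⟨hs.1.1, hs.1.2.1⟩
    · exact ⟨hs.2.1.1, hs.2.1.2.1⟩

lemma TT_cons_subset (hC : Perfect C) (hne : C.Nonempty) (b : Bool) (s : List Bool) :
    TT C (b :: s) ⊆ TT C s := by
  obtain ⟨hp, hn⟩ := TT_perfect hC hne s
  have hs := pairOf_spec hp hn (rfun_pos (s.length + 1))
  cases b
  · exact hs.1.2.2.1
  · exact hs.2.1.2.2.1

lemma TT_ball (hC : Perfect C) (hne : C.Nonempty) (b : Bool) (s : List Bool) :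
    ∃ z, TT C (b :: s) ⊆ Metric.closedBall z (rfun (s.length + 1)) := by
  obtain ⟨hp, hn⟩ := TT_perfect hC hne s
  have hs := pairOf_spec hp hn (rfun_pos (s.length + 1))
  cases b
  · exact hs.1.2.2.2
  · exact hs.2.1.2.2.2

lemma TT_disjoint (hC : Perfect C) (hne : C.Nonempty) (s : List Bool) :
    Disjoint (TT C (false :: s)) (TT C (true :: s)) := by
  obtain ⟨hp, hn⟩ := TT_perfect hC hne s
  exact (pairOf_spec hp hn (rfun_pos (s.length + 1))).2.2

lemma TT_subset_C (hC : Perfect C) (hne : C.Nonempty) (s : List Bool) : TT C s ⊆ C := by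
  induction s with
  | nil => exact Subset.rfl
  | cons b s ih => exact (TT_cons_subset hC hne b s).trans ih

lemma TT_suffix_subset (hC : Perfect C) (hne : C.Nonempty) :
    ∀ s t : List Bool, t <:+ s → TT C s ⊆ TT C t := by
  intro s
  induction s with
  | nil => intro t ht; rw [List.suffix_nil.mp ht]
  | cons b s ih =>
    intro t ht
    obtain ⟨u, hu⟩ := ht
    cases u with
    | nil => simp at hu; subst hu; exact Subset.rfl
    | cons c u' =>
      have hc : u' ++ t = s := by injection hu
      exact (TT_cons_subset hC hne b s).trans (ih t ⟨u', hc⟩)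

noncomputable def UU (C : Set ℝ) (n : ℕ) : Set ℝ := ⋃ s ∈ Sn n, TT C s

noncomputable def KK (C : Set ℝ) : Set ℝ := ⋂ n, UU C n
lemma TT_ball' (hC : Perfect C) (hne : C.Nonempty) (s : List Bool) (hs : s ≠ []) :
    ∃ z, TT C s ⊆ Metric.closedBall z (rfun s.length) := by
  match s with
  | b :: t => exact TT_ball hC hne b t

lemma UU_closed (hC : Perfect C) (hne : C.Nonempty) (n : ℕ) : IsClosed (UU C n) :=
  (Sn n).finite_toSet.isClosed_biUnion fun s _ => (TT_perfect hC hne s).1.closed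

lemma UU_antitone (hC : Perfect C) (hne : C.Nonempty) (n : ℕ) : UU C (n + 1) ⊆ UU C n := by
  intro x hx
  simp only [UU, mem_iUnion, exists_prop] at hx ⊢
  obtain ⟨s, hs, hxs⟩ := hx
  rw [mem_Sn] at hs
  match s with
  | b :: t =>
    have ht : t.length = n := by simpa using hs
    exact ⟨t, mem_Sn.mpr ht, TT_cons_subset hC hne b t hxs⟩

lemma KK_closed (hC : Perfect C) (hne : C.Nonempty) : IsClosed (KK C) :=
  isClosed_iInter fun n => UU_closed hC hne n

lemma KK_subset_C (hC : Perfect C) (hne : C.Nonempty) : KK C ⊆ C := by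
  intro x hx
  have h0 := mem_iInter.mp hx 0
  simpa [UU, Sn, TT] using h0

lemma TT_inter_KK (hC : Perfect C) (hne : C.Nonempty) (hcpt : IsCompact C) (s : List Bool) :
    (TT C s ∩ KK C).Nonempty := by
  set W : ℕ → Set ℝ := fun m => TT C (List.replicate m false ++ s) with hW
  have Wsub : ∀ m, W (m + 1) ⊆ W m := by
    intro m
    have : List.replicate (m + 1) false ++ s = false :: (List.replicate m false ++ s) := by
      simp [List.replicate_succ]
    rw [hW]; simp only; rw [this]
    exact TT_cons_subset hC hne false _
  have Wne : ∀ m, (W m).Nonempty := fun m => (TT_perfect hC hne _).2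
  have Wcl : ∀ m, IsClosed (W m) := fun m => (TT_perfect hC hne _).1.closed
  have Wcpt : IsCompact (W 0) :=
    hcpt.of_isClosed_subset (Wcl 0) (TT_subset_C hC hne _)
  obtain ⟨y, hy⟩ := IsCompact.nonempty_iInter_of_sequence_nonempty_isCompact_isClosed
    W Wsub Wne Wcpt Wcl
  have hys : y ∈ TT C s := by
    have := mem_iInter.mp hy 0
    simpa [hW] using this
  refine ⟨y, hys, ?_⟩
  rw [KK, mem_iInter]
  intro k
  rcases le_or_gt k s.length with hk | hk
  · have hsuf : s.drop (s.length - k) <:+ s := List.drop_suffix _ _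
    have hlen : (s.drop (s.length - k)).length = k := by
      rw [List.length_drop]; omega
    exact mem_biUnion (mem_Sn.mpr hlen) (TT_suffix_subset hC hne s _ hsuf hys)
  · have hym := mem_iInter.mp hy (k - s.length)
    have hlen : (List.replicate (k - s.length) false ++ s).length = k := by
      simp; omega
    exact mem_biUnion (mem_Sn.mpr hlen) hym

lemma KK_nonempty (hC : Perfect C) (hne : C.Nonempty) (hcpt : IsCompact C) :
    (KK C).Nonempty := by
  obtain ⟨y, _, hy⟩ := TT_inter_KK hC hne hcpt []
  exact ⟨y, hy⟩

lemma KK_compact (hC : Perfect C) (hne : C.Nonempty) (hcpt : IsCompact C) :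
    IsCompact (KK C) :=
  hcpt.of_isClosed_subset (KK_closed hC hne) (KK_subset_C hC hne)

lemma KK_perfect (hC : Perfect C) (hne : C.Nonempty) (hcpt : IsCompact C) :
    Perfect (KK C) := by
  refine ⟨KK_closed hC hne, ?_⟩
  rw [preperfect_iff_nhds]
  intro x hx U hU
  obtain ⟨ε, hε, hball⟩ := Metric.mem_nhds_iff.mp hU
  obtain ⟨n, hn1, hn2⟩ : ∃ n, rfun n < ε / 2 ∧ 1 ≤ n := by
    have h1 := rfun_tendsto.eventually_lt_const (by positivity : (0:ℝ) < ε / 2)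
    exact (h1.and (Filter.eventually_ge_atTop 1)).exists
  obtain ⟨s, hs, hxs⟩ : ∃ s ∈ Sn n, x ∈ TT C s := by
    have := mem_iInter.mp hx n
    simpa [UU, mem_iUnion, exists_prop] using this
  have hslen : s.length = n := mem_Sn.mp hs
  have hsne : s ≠ [] := by
    intro h; rw [h] at hslen; simp at hslen; omega
  obtain ⟨z, hz⟩ := TT_ball' hC hne s hsne
  -- pick the child not containing x
  obtain ⟨c, hc⟩ : ∃ c : Bool, x ∉ TT C (c :: s) := by
    by_cases h : x ∈ TT C (false :: s)
    · exact ⟨true, fun h' => (Set.disjoint_left.mp (TT_disjoint hC hne s) h) h'⟩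
    · exact ⟨false, h⟩
  obtain ⟨y, hyT, hyK⟩ := TT_inter_KK hC hne hcpt (c :: s)
  refine ⟨y, ⟨hball ?_, hyK⟩, fun h => hc (h ▸ hyT)⟩
  have hyS : y ∈ TT C s := TT_cons_subset hC hne c s hyT
  have d1 : dist x z ≤ rfun n := by
    have := hz hxs; rwa [Metric.mem_closedBall, hslen] at this
  have d2 : dist y z ≤ rfun n := by
    have := hz hyS; rwa [Metric.mem_closedBall, hslen] at this
  rw [Metric.mem_ball]
  calc dist y x ≤ dist y z + dist x z := dist_triangle_right _ _ _
    _ ≤ rfun n + rfun n := add_le_add d2 d1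
    _ < ε := by linarith

lemma vol_V (hC : Perfect C) (hne : C.Nonempty) (hcpt : IsCompact C) (n : ℕ) (hn : 1 ≤ n) :
    volume {x : ℝ | Metric.infDist x (KK C) < rfun n} ≤
      2 ^ n * ENNReal.ofReal (4 * rfun n) := by
  have hKne := KK_nonempty hC hne hcpt
  have hz : ∀ s : List Bool, ∃ z, s.length = n → TT C s ⊆ Metric.closedBall z (rfun n) := by
    intro s
    by_cases h : s.length = n
    · have hsne : s ≠ [] := by intro hh; rw [hh] at h; simp at h; omega
      obtain ⟨z, hzz⟩ := TT_ball' hC hne s hsne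
      exact ⟨z, fun _ => by rwa [h] at hzz⟩
    · exact ⟨0, fun hh => absurd hh h⟩
  choose z hzs using hz
  have hcover : {x : ℝ | Metric.infDist x (KK C) < rfun n} ⊆
      ⋃ s ∈ Sn n, Metric.ball (z s) (2 * rfun n) := by
    intro x hx
    obtain ⟨y, hyK, hxy⟩ := (Metric.infDist_lt_iff hKne).mp hx
    obtain ⟨s, hs, hys⟩ : ∃ s ∈ Sn n, y ∈ TT C s := by
      have := mem_iInter.mp hyK n
      simpa [UU, mem_iUnion, exists_prop] using this
    have hyz : dist y (z s) ≤ rfun n := hzs s (mem_Sn.mp hs) hys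
    refine mem_biUnion hs ?_
    rw [Metric.mem_ball]
    calc dist x (z s) ≤ dist x y + dist y (z s) := dist_triangle _ _ _
      _ < rfun n + rfun n := add_lt_add_of_lt_of_le hxy hyz
      _ = 2 * rfun n := by ring
  calc volume {x : ℝ | Metric.infDist x (KK C) < rfun n}
      ≤ volume (⋃ s ∈ Sn n, Metric.ball (z s) (2 * rfun n)) := measure_mono hcover
    _ ≤ ∑ s ∈ Sn n, volume (Metric.ball (z s) (2 * rfun n)) := measure_biUnion_finset_le _ _
    _ = ∑ _s ∈ Sn n, ENNReal.ofReal (2 * (2 * rfun n)) := by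
        simp [Real.volume_ball]
    _ = (Sn n).card * ENNReal.ofReal (2 * (2 * rfun n)) := by
        rw [Finset.sum_const, nsmul_eq_mul]
    _ ≤ 2 ^ n * ENNReal.ofReal (4 * rfun n) := by
        rw [show 2 * (2 * rfun n) = 4 * rfun n by ring]
        gcongr
        exact_mod_cast card_Sn n
lemma two_rpow_neg_nat (m : ℕ) : (2:ℝ) ^ (-(m:ℝ)) = (1/2:ℝ) ^ m := by
  rw [Real.rpow_neg (by norm_num), Real.rpow_natCast, one_div, inv_pow]

set_option maxHeartbeats 1000000 in
lemma summable_w {α : ℝ} (hα : α < 1) :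
    Summable (fun n : ℕ => (rfun (n+2)) ^ (-α) * ((2:ℝ) ^ (n+1) * (4 * rfun (n+1)))) := by
  set E : ℕ → ℝ := fun n => α * ((n:ℝ)+2)^2 + ((n:ℝ)+1) - ((n:ℝ)+1)^2 with hE
  have hw : ∀ n : ℕ, (rfun (n+2)) ^ (-α) * ((2:ℝ) ^ (n+1) * (4 * rfun (n+1)))
      = 4 * (2:ℝ) ^ (E n) := by
    intro n
    have h1 : (rfun (n+2)) ^ (-α) = (2:ℝ) ^ (α * ((n:ℝ)+2)^2) := by
      rw [rfun, ← Real.rpow_mul (by norm_num : (0:ℝ) ≤ 2)]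
      congr 1
      push_cast
      ring
    have h2 : ((2:ℝ)) ^ (n+1) = (2:ℝ) ^ (((n:ℝ))+1) := by
      rw [← Real.rpow_natCast (2:ℝ) (n+1)]
      congr 1
      push_cast
      ring
    have h3 : rfun (n+1) = (2:ℝ) ^ (-(((n:ℝ))+1)^2) := by
      rw [rfun]
      congr 1
      push_cast
      ring
    have comb : ∀ A B D : ℝ, (2:ℝ)^A * ((2:ℝ)^B * (4 * (2:ℝ)^D)) = 4 * (2:ℝ)^(A+(B+D)) := by
      intro A B D
      rw [Real.rpow_add two_pos, Real.rpow_add two_pos]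
      ring
    rw [h1, h2, h3, comb, hE]
    congr 2
    ring
  suffices hS : Summable (fun n => 4 * (2:ℝ) ^ (E n)) by
    exact hS.congr fun n => (hw n).symm
  set N := ⌈4 / (1 - α)⌉₊ with hN
  have hβ : 0 < 1 - α := by linarith
  have key : ∀ n : ℕ, E (n + N) ≤ -(((n + N : ℕ)):ℝ) := by
    intro n
    set m : ℕ := n + N
    have hm : 4 / (1 - α) ≤ (m:ℝ) := by
      calc 4 / (1 - α) ≤ (N:ℝ) := Nat.le_ceil _
        _ ≤ (m:ℝ) := by exact_mod_cast Nat.le_add_left N n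
    have h4 : 4 ≤ (1 - α) * ((m:ℝ) + 2) := by
      have := (div_le_iff₀ hβ).mp hm
      nlinarith
    have hm2 : (0:ℝ) ≤ (m:ℝ) + 2 := by positivity
    have hmul := mul_le_mul_of_nonneg_right h4 hm2
    rw [hE]
    simp only
    nlinarith [Nat.cast_nonneg (α := ℝ) m]
  rw [← summable_nat_add_iff N]
  refine Summable.of_nonneg_of_le (fun n => by positivity) (fun n => ?_)
    ((summable_geometric_of_lt_one (r := (1/2:ℝ)) (by norm_num) (by norm_num)).mul_left 4)
  ·
    have h1 : (2:ℝ) ^ (E (n + N)) ≤ (2:ℝ) ^ (-(((n + N : ℕ)):ℝ)) :=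
      Real.rpow_le_rpow_of_exponent_le one_le_two (key n)
    have h2 : (2:ℝ) ^ (-(((n + N : ℕ)):ℝ)) = (1/2:ℝ) ^ (n + N) := two_rpow_neg_nat _
    have h3 : ((1:ℝ)/2) ^ (n + N) ≤ (1/2:ℝ) ^ n := by
      apply pow_le_pow_of_le_one (by norm_num) (by norm_num)
      omega
    nlinarith
set_option maxHeartbeats 1000000 in
lemma KK_integrableOn {a b : ℝ} (hC : Perfect C) (hne : C.Nonempty) (hcpt : IsCompact C)
    (hCab : C ⊆ Icc a b) {α : ℝ} (hα : α < 1) :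
    IntegrableOn (fun x : ℝ => (Metric.infDist x (KK C)) ^ (-α)) (Icc a b) volume := by
  classical
  have hKne := KK_nonempty hC hne hcpt
  have hKcl := KK_closed hC hne
  set K := KK C with hK
  set f : ℝ → ℝ := fun x => (Metric.infDist x K) ^ (-α) with hf
  have hfnn : ∀ x, 0 ≤ f x := fun x => Real.rpow_nonneg Metric.infDist_nonneg _
  have hmeas : Measurable f :=
    (Metric.continuous_infDist_pt K).measurable.pow measurable_const
  rcases le_or_gt α 0 with hα0 | hα0
  · -- bounded case
    obtain ⟨k, hk⟩ := hKne
    have hkab : k ∈ Icc a b := ((KK_subset_C hC hne).trans hCab) hk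
    refine Measure.integrableOn_of_bounded (M := (b - a + 1) ^ (-α))
      measure_Icc_lt_top.ne hmeas.aestronglyMeasurable ?_
    filter_upwards [ae_restrict_mem measurableSet_Icc] with x hx
    rw [Real.norm_of_nonneg (hfnn x)]
    have hdle : Metric.infDist x K ≤ b - a + 1 := by
      have h1 : Metric.infDist x K ≤ dist x k := Metric.infDist_le_dist_of_mem hk
      have h2 : dist x k ≤ b - a := by
        rw [Real.dist_eq, abs_sub_le_iff]
        constructor <;> [skip; skip] <;>
          · obtain ⟨hx1, hx2⟩ := hx; obtain ⟨hk1, hk2⟩ := hkab; linarith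
      linarith
    exact Real.rpow_le_rpow Metric.infDist_nonneg hdle (by linarith)
  · -- singular case 0 < α < 1
    refine ⟨hmeas.aestronglyMeasurable, ?_⟩
    rw [hasFiniteIntegral_iff_ofReal (Filter.Eventually.of_forall hfnn)]
    set S : Set ℝ := Icc a b ∩ {x | rfun 1 ≤ Metric.infDist x K} with hS
    set A : ℕ → Set ℝ := fun n =>
      {x | Metric.infDist x K < rfun (n+1)} ∩ {x | rfun (n+2) ≤ Metric.infDist x K} with hA
    have hdclosed : ∀ r : ℝ, IsClosed {x : ℝ | r ≤ Metric.infDist x K} :=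
      fun r => isClosed_le continuous_const (Metric.continuous_infDist_pt K)
    have hdopen : ∀ r : ℝ, IsOpen {x : ℝ | Metric.infDist x K < r} :=
      fun r => isOpen_lt (Metric.continuous_infDist_pt K) continuous_const
    have hcover : Icc a b ⊆ (K ∪ S) ∪ ⋃ n, A n := by
      intro x hx
      by_cases hxK : x ∈ K
      · exact Or.inl (Or.inl hxK)
      have hd : 0 < Metric.infDist x K := (hKcl.notMem_iff_infDist_pos hKne).mp hxK
      by_cases h1 : rfun 1 ≤ Metric.infDist x K
      · exact Or.inl (Or.inr ⟨hx, h1⟩)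
      push_neg at h1
      have hex : ∃ m, rfun m ≤ Metric.infDist x K := by
        obtain ⟨m, hm⟩ := (rfun_tendsto.eventually_lt_const hd).exists
        exact ⟨m, hm.le⟩
      have hspec := Nat.find_spec hex
      have hmin : ∀ j < Nat.find hex, Metric.infDist x K < rfun j :=
        fun j hj => lt_of_not_ge (Nat.find_min hex hj)
      have hn2 : 2 ≤ Nat.find hex := by
        by_contra h
        push_neg at h
        have : rfun 1 ≤ rfun (Nat.find hex) := rfun_anti (by omega)
        linarith
      refine Or.inr (mem_iUnion.mpr ⟨Nat.find hex - 2, ?_, ?_⟩)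
      · exact hmin _ (by omega)
      · simpa [show Nat.find hex - 2 + 2 = Nat.find hex by omega] using hspec
    have hbound : ∀ (T : Set ℝ) (r : ℝ), 0 < r → MeasurableSet T →
        (∀ x ∈ T, r ≤ Metric.infDist x K) →
        ∫⁻ x in T, ENNReal.ofReal (f x) ∂volume ≤ ENNReal.ofReal (r ^ (-α)) * volume T := by
      intro T r hr hT hrT
      calc ∫⁻ x in T, ENNReal.ofReal (f x) ∂volume
          ≤ ∫⁻ _x in T, ENNReal.ofReal (r ^ (-α)) ∂volume := by
            refine setLIntegral_mono' hT fun x hx => ?_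
            exact ENNReal.ofReal_le_ofReal
              (Real.rpow_le_rpow_of_nonpos hr (hrT x hx) (by linarith))
        _ = ENNReal.ofReal (r ^ (-α)) * volume T := setLIntegral_const T _
    calc ∫⁻ x in Icc a b, ENNReal.ofReal (f x) ∂volume
        ≤ ∫⁻ x in (K ∪ S) ∪ ⋃ n, A n, ENNReal.ofReal (f x) ∂volume :=
          lintegral_mono_set hcover
      _ ≤ (∫⁻ x in K, ENNReal.ofReal (f x) ∂volume
            + ∫⁻ x in S, ENNReal.ofReal (f x) ∂volume)
            + ∫⁻ x in ⋃ n, A n, ENNReal.ofReal (f x) ∂volume := by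
          refine le_trans (lintegral_union_le _ _ _) ?_
          gcongr
          exact lintegral_union_le _ _ _
      _ ≤ (0 + ENNReal.ofReal ((rfun 1) ^ (-α)) * volume (Icc a b))
            + ∑' n, ∫⁻ x in A n, ENNReal.ofReal (f x) ∂volume := by
          gcongr
          · -- integral over K is zero
            have : ∀ x ∈ K, ENNReal.ofReal (f x) = (0 : ℝ≥0∞) := by
              intro x hx
              rw [hf]
              simp only
              rw [Metric.infDist_zero_of_mem hx, Real.zero_rpow (by linarith)]
              simp
            rw [setLIntegral_congr_fun hKcl.measurableSet
              (fun x hx => this x hx)]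
            simp
          · -- integral over S
            refine le_trans (hbound S (rfun 1) (rfun_pos 1)
              (measurableSet_Icc.inter (hdclosed _).measurableSet)
              (fun x hx => hx.2) ) ?_
            exact mul_le_mul_right
              (measure_mono (show S ⊆ Icc a b from inter_subset_left)) _
          · exact lintegral_iUnion_le _ _
      _ < ∞ := by
          rw [zero_add]
          refine ENNReal.add_lt_top.mpr ⟨ENNReal.mul_lt_top ENNReal.ofReal_lt_top
            measure_Icc_lt_top, ?_⟩
          have hterm : ∀ n : ℕ, ∫⁻ x in A n, ENNReal.ofReal (f x) ∂volume ≤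
              ENNReal.ofReal ((rfun (n+2)) ^ (-α) * ((2:ℝ) ^ (n+1) * (4 * rfun (n+1)))) := by
            intro n
            refine le_trans (hbound (A n) (rfun (n+2)) (rfun_pos _)
              ((hdopen _).measurableSet.inter (hdclosed _).measurableSet)
              (fun x hx => hx.2)) ?_
            have hvol : volume (A n) ≤ (2:ℝ≥0∞) ^ (n+1) * ENNReal.ofReal (4 * rfun (n+1)) := by
              refine le_trans (measure_mono inter_subset_left) ?_
              exact vol_V hC hne hcpt (n+1) (by omega)
            calc ENNReal.ofReal ((rfun (n+2)) ^ (-α)) * volume (A n)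
                ≤ ENNReal.ofReal ((rfun (n+2)) ^ (-α)) *
                  ((2:ℝ≥0∞) ^ (n+1) * ENNReal.ofReal (4 * rfun (n+1))) := by gcongr
              _ = ENNReal.ofReal ((rfun (n+2)) ^ (-α) * ((2:ℝ) ^ (n+1) * (4 * rfun (n+1)))) := by
                  rw [show ((2:ℝ≥0∞)) ^ (n+1) = ENNReal.ofReal ((2:ℝ) ^ (n+1)) by
                      rw [ENNReal.ofReal_pow (by norm_num)]
                      norm_num,
                    ← ENNReal.ofReal_mul (by positivity),
                    ← ENNReal.ofReal_mul (Real.rpow_nonneg (rfun_pos _).le _)]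
          calc ∑' n, ∫⁻ x in A n, ENNReal.ofReal (f x) ∂volume
              ≤ ∑' n, ENNReal.ofReal
                  ((rfun (n+2)) ^ (-α) * ((2:ℝ) ^ (n+1) * (4 * rfun (n+1)))) :=
                ENNReal.tsum_le_tsum hterm
            _ = ENNReal.ofReal (∑' n, (rfun (n+2)) ^ (-α) * ((2:ℝ) ^ (n+1) * (4 * rfun (n+1)))) :=
                (ENNReal.ofReal_tsum_of_nonneg
                  (fun n => mul_nonneg (Real.rpow_nonneg (rfun_pos _).le _)
                    (mul_nonneg (by positivity)
                      (mul_nonneg (by norm_num) (rfun_pos _).le))) (summable_w hα)).symm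
            _ < ∞ := ENNReal.ofReal_lt_top

theorem stmt_0 (a b : ℝ) (hab : a ≤ b) (F : Set ℝ) (hFsub : F ⊆ Icc a b)
    (hFclosed : IsClosed F) (hFunc : ¬ F.Countable) :
    ∃ K : Set ℝ, K ⊆ F ∧ K.Nonempty ∧ IsCompact K ∧ Perfect K ∧
      ∀ α : ℝ, α < 1 →
        IntegrableOn (fun x : ℝ => (Metric.infDist x K) ^ (-α)) (Icc a b) volume := by
  obtain ⟨C, hCp, hCne, hCF⟩ :=
    exists_perfect_nonempty_of_isClosed_of_not_countable hFclosed hFunc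
  have hCab : C ⊆ Icc a b := hCF.trans hFsub
  have hcpt : IsCompact C := isCompact_Icc.of_isClosed_subset hCp.closed hCab
  exact ⟨KK C, (KK_subset_C hCp hCne).trans hCF, KK_nonempty hCp hCne hcpt,
    KK_compact hCp hCne hcpt, KK_perfect hCp hCne hcpt,
    fun α hα => KK_integrableOn hCp hCne hcpt hCab hα⟩
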